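/- For each fixed positive integer r, there are only finitely many tuples (d, e_1, ..., e_r) of positive integers with e_1 ≥ e_2 ≥ ... ≥ e_r, each e_k dividing d, each e_k < d, and (e_1 + 1) + (e_2 + 1) + ... + (e_r + 1) = d + 1. -/

import Mathlib

lemma unitFrac_finite : ∀ (n : ℕ) (q : ℚ),
    {x : Fin n → ℕ | (∀ i, 0 < x i) ∧ Monotone x ∧ ∑ i, (1:ℚ)/(x i) = q}.Finite := by
  intro n
  induction n with
  | zero => intro q; exact Set.toFinite _
  | succ n ih =>
    intro q
    rcases le_or_gt q 0 with hq | hq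
    · convert Set.finite_empty
      rw [Set.eq_empty_iff_forall_notMem]
      rintro x ⟨h1, h2, h3⟩
      have : 0 < ∑ i, (1:ℚ)/(x i) := by
        apply Finset.sum_pos
        · intro i _
          exact one_div_pos.mpr (by exact_mod_cast h1 i)
        · exact Finset.univ_nonempty
      linarith
    · set B := ⌈(n+1 : ℚ)/q⌉₊ with hB
      have hsub : {x : Fin (n+1) → ℕ | (∀ i, 0 < x i) ∧ Monotone x ∧ ∑ i, (1:ℚ)/(x i) = q}
          ⊆ ⋃ a ∈ Finset.range (B+1), (fun y : Fin n → ℕ => (Fin.cons a y : Fin (n+1) → ℕ)) ''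
            {y : Fin n → ℕ | (∀ i, 0 < y i) ∧ Monotone y ∧ ∑ i, (1:ℚ)/(y i) = q - 1/a} := by
        rintro x ⟨h1, h2, h3⟩
        have hx0 : (0:ℚ) < x 0 := by exact_mod_cast h1 0
        have hle : ∀ i : Fin (n+1), (1:ℚ)/(x i) ≤ 1/(x 0) := by
          intro i
          apply one_div_le_one_div_of_le hx0
          exact_mod_cast h2 (Fin.zero_le i)
        have hq' : q ≤ (n+1) / (x 0) := by
          calc q = ∑ i, (1:ℚ)/(x i) := h3.symm
            _ ≤ ∑ _i : Fin (n+1), (1:ℚ)/(x 0) := Finset.sum_le_sum (fun i _ => hle i)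
            _ = (n+1) / (x 0) := by
                rw [Finset.sum_const, Finset.card_univ, Fintype.card_fin]
                push_cast; ring
        have hbound : (x 0 : ℚ) ≤ (n+1)/q := by
          rw [le_div_iff₀ hq]
          rw [le_div_iff₀ hx0] at hq'
          linarith
        have hmem : x 0 ∈ Finset.range (B+1) := by
          rw [Finset.mem_range, Nat.lt_succ_iff, hB]
          exact_mod_cast hbound.trans (Nat.le_ceil _)
        refine Set.mem_biUnion hmem ?_
        refine ⟨Fin.tail x, ⟨fun i => h1 i.succ, ?_, ?_⟩, Fin.cons_self_tail x⟩
        · exact fun i j hij => h2 (Fin.succ_le_succ_iff.mpr hij)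
        · have hs := Fin.sum_univ_succ (fun i => (1:ℚ)/(x i))
          rw [h3] at hs
          simp only [Fin.tail]
          linarith
      exact Set.Finite.subset
        (Set.Finite.biUnion (Finset.range (B+1)).finite_toSet (fun a _ => (ih _).image _)) hsub

/-- For each fixed `r ≥ 1`, there are only finitely many tuples `(d, e₁, …, e_r)`
of positive integers with `e₁ ≥ ⋯ ≥ e_r`, each `e_k ∣ d`, each `e_k < d`, and
`∑ (e_k + 1) = d + 1`. -/
theorem neat_canonical_forms_finite (r : ℕ) (hr : 0 < r) :
    {de : ℕ × (Fin r → ℕ) | (∀ k, 0 < de.2 k) ∧ Antitone de.2 ∧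
      (∀ k, de.2 k ∣ de.1) ∧ (∀ k, de.2 k < de.1) ∧
      (∑ k, (de.2 k + 1)) = de.1 + 1}.Finite := by
  obtain ⟨s, rfl⟩ : ∃ s, r = s + 1 := ⟨r - 1, by omega⟩
  rcases s with _ | t
  · -- r = 1 : set is empty
    convert Set.finite_empty
    rw [Set.eq_empty_iff_forall_notMem]
    rintro ⟨d, e⟩ ⟨h1, h2, h3, h4, h5⟩
    have hlt : e 0 < d := h4 0
    have h5' : e 0 + 1 = d + 1 := by simpa using h5
    omega
  · set r := t + 2 with hrdef
    -- the map to unit fraction solutions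
    set E : (ℕ × (Fin r → ℕ)) → (Fin (r + (t+1)) → ℕ) :=
      fun de => Fin.append de.2 (fun _ : Fin (t+1) => 1) with hE
    set F : (ℕ × (Fin r → ℕ)) → (Fin (r + (t+1)) → ℕ) :=
      fun de i => de.1 / E de i with hF
    set S := {de : ℕ × (Fin r → ℕ) | (∀ k, 0 < de.2 k) ∧ Antitone de.2 ∧
      (∀ k, de.2 k ∣ de.1) ∧ (∀ k, de.2 k < de.1) ∧
      (∑ k, (de.2 k + 1)) = de.1 + 1} with hS
    -- basic facts about elements of S
    have key : ∀ de ∈ S, (∀ i, 0 < E de i) ∧ (∀ i, E de i ∣ de.1) ∧ Antitone (E de)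
        ∧ 0 < de.1 ∧ (∑ i, E de i) = de.1 := by
      rintro ⟨d, e⟩ ⟨h1, h2, h3, h4, h5⟩
      have hd : 0 < d := lt_of_le_of_lt (Nat.zero_le _) (h4 0)
      have hpos : ∀ i, 0 < E (d, e) i := by
        intro i
        refine Fin.addCases ?_ ?_ i
        · intro j; simpa [hE] using h1 j
        · intro j; simp [hE]
      have hdvd : ∀ i, E (d, e) i ∣ d := by
        intro i
        refine Fin.addCases ?_ ?_ i
        · intro j; simpa [hE] using h3 j
        · intro j; simp [hE]
      have hanti : Antitone (E (d, e)) := by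
        intro i j hij
        refine Fin.addCases (motive := fun j => i ≤ j → E (d,e) j ≤ E (d,e) i) ?_ ?_ j hij
        · intro j hij
          refine Fin.addCases (motive := fun i => i ≤ Fin.castAdd (t+1) j → E (d,e) (Fin.castAdd (t+1) j) ≤ E (d,e) i) ?_ ?_ i hij
          · intro i hij
            simp only [hE, Fin.append_left]
            refine h2 ?_
            rw [Fin.le_def] at hij ⊢
            simpa using hij
          · intro i hij
            exfalso
            have := hij
            simp [Fin.le_def] at this
            omega
        · intro j _
          have : (1:ℕ) ≤ E (d,e) i := hpos i
          simpa [hE] using this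
      have hsum : (∑ i, E (d, e) i) = d := by
        have hs : (∑ k, e k) + r = d + 1 := by
          have := h5
          rw [Finset.sum_add_distrib] at this
          simpa using this
        rw [hE]
        simp only [Fin.sum_univ_add, Fin.append_left, Fin.append_right]
        simp only [Finset.sum_const, Finset.card_univ, Fintype.card_fin, smul_eq_mul, mul_one]
        omega
      exact ⟨hpos, hdvd, hanti, hd, hsum⟩
    have himg : F '' S ⊆ {x : Fin (r + (t+1)) → ℕ | (∀ i, 0 < x i) ∧ Monotone x
        ∧ ∑ i, (1:ℚ)/(x i) = 1} := by
      rintro _ ⟨de, hde, rfl⟩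
      obtain ⟨hpos, hdvd, hanti, hd, hsum⟩ := key de hde
      refine ⟨?_, ?_, ?_⟩
      · intro i
        exact Nat.div_pos (Nat.le_of_dvd hd (hdvd i)) (hpos i)
      · intro i j hij
        exact Nat.div_le_div_left (hanti hij) (hpos j)
      · have hterm : ∀ i, (1:ℚ)/((F de i : ℕ) : ℚ) = (E de i : ℚ) / (de.1 : ℚ) := by
          intro i
          rw [hF]
          simp only
          rw [Nat.cast_div (hdvd i) (by exact_mod_cast (hpos i).ne')]
          rw [one_div_div]
        rw [Finset.sum_congr rfl (fun i _ => hterm i)]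
        rw [← Finset.sum_div]
        rw [← Nat.cast_sum, hsum]
        exact div_self (by exact_mod_cast hd.ne')
    have hinj : Set.InjOn F S := by
      rintro ⟨d, e⟩ hde ⟨d', e'⟩ hde' heq
      obtain ⟨hpos, hdvd, hanti, hd, hsum⟩ := key _ hde
      obtain ⟨hpos', hdvd', hanti', hd', hsum'⟩ := key _ hde'
      have hdd : d = d' := by
        have := congrFun heq (Fin.natAdd r (0 : Fin (t+1)))
        simpa [hF, hE, Fin.append_right] using this
      subst hdd
      have hee : e = e' := by
        funext k
        have := congrFun heq (Fin.castAdd (t+1) k)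
        simp only [hF, hE, Fin.append_left] at this
        have h1 : d / (d / e k) = d / (d / e' k) := by rw [this]
        rwa [Nat.div_div_self (hde.2.2.1 k) hd.ne',
          Nat.div_div_self (hde'.2.2.1 k) hd.ne'] at h1
      rw [hee]
    exact Set.Finite.of_finite_image
      (Set.Finite.subset (unitFrac_finite _ 1) himg) hinj
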